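/- If p : Y → X is a semicovering map, f : W → X is any continuous map, and W ×_X Y = {(w, y) | f(w) = p(y)} is the pullback with the subspace topology of the product, then the projection f*p : W ×_X Y → W is a semicovering map. -/

import Mathlib

open unitInterval

variable {X Y : Type*} [TopologicalSpace X] [TopologicalSpace Y]

/-- The space of paths in `X` starting at `x`, with the compact-open topology. -/
abbrev PathsFrom (X : Type*) [TopologicalSpace X] (x : X) : Type _ :=
  {α : C(I, X) // α 0 = x}

/-- Postcomposition `𝒫p : (𝒫Y)_y → (𝒫X)_{p(y)}`. -/
def pathPost (p : C(Y, X)) (y : Y) (α : PathsFrom Y y) : PathsFrom X (p y) :=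
  ⟨p.comp α.1, by simp [α.2]⟩

/-- The space of homotopies of paths starting at `x` (the initial-endpoint edge is fixed at `x`),
with the compact-open topology. -/
abbrev HtpysFrom (X : Type*) [TopologicalSpace X] (x : X) : Type _ :=
  {φ : C(I × I, X) // ∀ s, φ (s, 0) = x}

/-- Postcomposition `Φp : (ΦY)_y → (ΦX)_{p(y)}`. -/
def htpyPost (p : C(Y, X)) (y : Y) (φ : HtpysFrom Y y) : HtpysFrom X (p y) :=
  ⟨p.comp φ.1, by simp [φ.2]⟩

/-- A semicovering map: a local homeomorphism with continuous lifting of paths and homotopies. -/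
structure IsSemicoveringMap (p : C(Y, X)) : Prop where
  isLocalHomeomorph : IsLocalHomeomorph p
  pathLifting : ∀ y : Y, IsHomeomorph (pathPost p y)
  htpyLifting : ∀ y : Y, IsHomeomorph (htpyPost p y)

/-- The pullback of a semicovering `p : Y → X` along any map `f : W → X` is a
semicovering of `W`. -/
theorem semicovering_pullback {X Y W : Type*} [TopologicalSpace X] [TopologicalSpace Y]
    [TopologicalSpace W] (p : C(Y, X)) (hp : IsSemicoveringMap p) (f : C(W, X)) :
    IsSemicoveringMap
      (⟨fun wy : {wy : W × Y // f wy.1 = p wy.2} => wy.1.1,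
        continuous_fst.comp continuous_subtype_val⟩ :
        C({wy : W × Y // f wy.1 = p wy.2}, W)) := by
  classical
  set Z := {wy : W × Y // f wy.1 = p wy.2} with hZ
  set q : C(Z, W) := ⟨fun wy => wy.1.1, continuous_fst.comp continuous_subtype_val⟩ with hq
  constructor
  · -- local homeomorphism
    intro z
    obtain ⟨e, hy, hpe⟩ := hp.isLocalHomeomorph z.1.2
    have hpe' : ∀ y', p y' = e y' := fun y' => congrFun hpe y'
    refine ⟨⟨⟨⟨fun z' => z'.1.1,
        fun w' => if h : f w' = p (e.symm (f w')) then ⟨(w', e.symm (f w')), h⟩ else z,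
        {z' : Z | z'.1.2 ∈ e.source}, f ⁻¹' e.target, ?_, ?_, ?_, ?_⟩, ?_, ?_⟩, ?_, ?_⟩,
      hy, rfl⟩
    · intro z' hz'
      show f z'.1.1 ∈ e.target
      rw [z'.2, hpe']
      exact e.map_source hz'
    · intro w' hw'
      have h : f w' = p (e.symm (f w')) := by
        rw [hpe', e.right_inv hw']
      simp only [dif_pos h]
      exact e.map_target hw'
    · intro z' hz'
      have h : f z'.1.1 = p (e.symm (f z'.1.1)) := by
        rw [z'.2, hpe', e.left_inv hz', ← hpe']
      simp only [dif_pos h]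
      have hfz : f z'.1.1 = e z'.1.2 := by rw [z'.2]; exact hpe' _
      refine Subtype.ext (Prod.ext rfl ?_)
      show e.symm (f z'.1.1) = z'.1.2
      rw [hfz, e.left_inv hz']
    · intro w' hw'
      have h : f w' = p (e.symm (f w')) := by
        rw [hpe', e.right_inv hw']
      simp only [dif_pos h]
    rotate_left 2
    · exact e.open_source.preimage
        (continuous_snd.comp (continuous_subtype_val : Continuous (Subtype.val : Z → W × Y)))
    · exact e.open_target.preimage f.continuous
    · exact (continuous_fst.comp continuous_subtype_val).continuousOn
    · rw [continuousOn_iff_continuous_restrict]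
      have : Continuous fun w' : f ⁻¹' e.target =>
          (⟨(w'.1, e.symm (f w'.1)), by rw [hpe', e.right_inv w'.2]⟩ : Z) := by
        refine Continuous.subtype_mk (continuous_subtype_val.prodMk ?_) _
        exact e.continuousOn_symm.comp_continuous
          (f.continuous.comp continuous_subtype_val) fun w' => w'.2
      refine this.congr fun w' => ?_
      have h : f w'.1 = p (e.symm (f w'.1)) := by rw [hpe', e.right_inv w'.2]
      simp only [Set.restrict_apply, dif_pos h]
  · -- path lifting
    rintro ⟨⟨w, y⟩, hz⟩
    have hz' : f w = p y := hz
    set h := (hp.pathLifting y).homeomorph (pathPost p y) with hh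
    have happ : ∀ β, h β = pathPost p y β := fun _ => rfl
    -- the lifted second component
    set lift : PathsFrom W w → PathsFrom Y y := fun α =>
      h.symm ⟨f.comp α.1, by simp [α.2, hz']⟩ with hlift
    have key : ∀ α : PathsFrom W w, ∀ t, p ((lift α).1 t) = f (α.1 t) := by
      intro α t
      have := h.apply_symm_apply ⟨f.comp α.1, by simp [α.2, hz']⟩
      rw [happ] at this
      have := congrArg (fun g => g.1 t) this
      simpa [pathPost] using this
    rw [isHomeomorph_iff_exists_inverse]
    refine ⟨?_, fun α => ⟨⟨fun t => ⟨(α.1 t, (lift α).1 t), (key α t).symm⟩,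
        (α.1.continuous.prodMk (lift α).1.continuous).subtype_mk _⟩,
        Subtype.ext (Prod.ext α.2 (lift α).2)⟩, ?_, ?_, ?_⟩
    · exact Continuous.subtype_mk
        ((ContinuousMap.continuous_postcomp q).comp continuous_subtype_val) _
    · -- left inverse
      intro γ
      have hsnd : lift (pathPost q ⟨(w, y), hz⟩ γ) =
          ⟨⟨fun t => (γ.1 t).1.2,
            (continuous_snd.comp (continuous_subtype_val.comp γ.1.continuous))⟩,
            congrArg (fun z : Z => (z : W × Y).2) γ.2⟩ := by
        show h.symm _ = _
        exact h.symm_apply_eq.mpr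
          (Subtype.ext (ContinuousMap.ext fun t => (γ.1 t).2))
      beta_reduce
      refine Subtype.ext (ContinuousMap.ext fun t => Subtype.ext (Prod.ext rfl ?_))
      exact congrArg (fun β => β.1 t) hsnd
    · -- right inverse
      intro α
      exact Subtype.ext (ContinuousMap.ext fun t => rfl)
    · -- continuity of the inverse
      refine Continuous.subtype_mk ?_ _
      refine ContinuousMap.continuous_of_continuous_uncurry _ ?_
      refine Continuous.subtype_mk (Continuous.prodMk ?_ ?_) _
      · exact (continuous_subtype_val.comp continuous_fst).eval continuous_snd
      · have hliftc : Continuous fun α : PathsFrom W w => (lift α).1 := by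
          refine continuous_subtype_val.comp (h.symm.continuous.comp ?_)
          exact Continuous.subtype_mk
            ((ContinuousMap.continuous_postcomp f).comp continuous_subtype_val) _
        exact (hliftc.comp continuous_fst).eval continuous_snd
  · -- homotopy lifting
    rintro ⟨⟨w, y⟩, hz⟩
    have hz' : f w = p y := hz
    set h := (hp.htpyLifting y).homeomorph (htpyPost p y) with hh
    have happ : ∀ β, h β = htpyPost p y β := fun _ => rfl
    set lift : HtpysFrom W w → HtpysFrom Y y := fun φ =>
      h.symm ⟨f.comp φ.1, by simp [φ.2, hz']⟩ with hlift
    have key : ∀ φ : HtpysFrom W w, ∀ t, p ((lift φ).1 t) = f (φ.1 t) := by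
      intro φ t
      have := h.apply_symm_apply ⟨f.comp φ.1, by simp [φ.2, hz']⟩
      rw [happ] at this
      have := congrArg (fun g => g.1 t) this
      simpa [htpyPost] using this
    rw [isHomeomorph_iff_exists_inverse]
    refine ⟨?_, fun φ => ⟨⟨fun t => ⟨(φ.1 t, (lift φ).1 t), (key φ t).symm⟩,
        (φ.1.continuous.prodMk (lift φ).1.continuous).subtype_mk _⟩,
        fun s => Subtype.ext (Prod.ext (φ.2 s) ((lift φ).2 s))⟩, ?_, ?_, ?_⟩
    · exact Continuous.subtype_mk
        ((ContinuousMap.continuous_postcomp q).comp continuous_subtype_val) _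
    · intro γ
      have hsnd : lift (htpyPost q ⟨(w, y), hz⟩ γ) =
          ⟨⟨fun t => (γ.1 t).1.2,
            (continuous_snd.comp (continuous_subtype_val.comp γ.1.continuous))⟩,
            fun s => congrArg (fun z : Z => (z : W × Y).2) (γ.2 s)⟩ := by
        show h.symm _ = _
        exact h.symm_apply_eq.mpr
          (Subtype.ext (ContinuousMap.ext fun t => (γ.1 t).2))
      beta_reduce
      refine Subtype.ext (ContinuousMap.ext fun t => Subtype.ext (Prod.ext rfl ?_))
      exact congrArg (fun β => β.1 t) hsnd
    · intro φ
      exact Subtype.ext (ContinuousMap.ext fun t => rfl)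
    · refine Continuous.subtype_mk ?_ _
      refine ContinuousMap.continuous_of_continuous_uncurry _ ?_
      refine Continuous.subtype_mk (Continuous.prodMk ?_ ?_) _
      · exact (continuous_subtype_val.comp continuous_fst).eval continuous_snd
      · have hliftc : Continuous fun φ : HtpysFrom W w => (lift φ).1 := by
          refine continuous_subtype_val.comp (h.symm.continuous.comp ?_)
          exact Continuous.subtype_mk
            ((ContinuousMap.continuous_postcomp f).comp continuous_subtype_val) _
        exact (hliftc.comp continuous_fst).eval continuous_snd
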